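/- The Lagrangian curl annihilates Lagrangian gradients. Let U ⊆ ℝ³ be open, let η : U → ℝ³ be of class C² with Dη(x) invertible for every x ∈ U, set A(x) = (Dη(x))^{−1}, and let F : U → ℝ be of class C². Then for every x ∈ U and every k ∈ {1,2,3}: ε_{kji} · A^s_j(x) · ∂_s( A^r_i ∂_r F )(x) = 0 (summation over i, j, r, s ∈ {1,2,3}), i.e. curl_η(∇_η F) = 0, where (∇_η F)_i = A^r_i F,_r and [curl_η W]_k = ε_{kji} A^s_j W^i,_s. -/

import Mathlib

open Matrix

/-- Spatial Jacobian matrix of a map `ℝ³ → ℝ³`, entries `(Dη)^r_s = ∂η^r/∂x_s`. -/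
noncomputable def sjac (η : (Fin 3 → ℝ) → (Fin 3 → ℝ)) (x : Fin 3 → ℝ) :
    Matrix (Fin 3) (Fin 3) ℝ :=
  Matrix.of fun r s => fderiv ℝ (fun y => η y r) x (Pi.single s 1)

/-- The permutation symbol `ε_{ijk}`. -/
def eps (i j k : Fin 3) : ℝ :=
  if (i, j, k) = (0, 1, 2) ∨ (i, j, k) = (1, 2, 0) ∨ (i, j, k) = (2, 0, 1) then 1
  else if (i, j, k) = (2, 1, 0) ∨ (i, j, k) = (1, 0, 2) ∨ (i, j, k) = (0, 2, 1) then -1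
  else 0

section Aux
-- component smoothness
lemma comp2 {U : Set (Fin 3 → ℝ)} (hU : IsOpen U) {η : (Fin 3 → ℝ) → (Fin 3 → ℝ)}
    (hη : ContDiffOn ℝ 2 η U) {x : Fin 3 → ℝ} (hx : x ∈ U) (i : Fin 3) :
    ContDiffAt ℝ 2 (fun y => η y i) x := by
  have h0 : ContDiffAt ℝ 2 η x := hη.contDiffAt (hU.mem_nhds hx)
  exact ((ContinuousLinearMap.proj (R := ℝ) (φ := fun _ : Fin 3 => ℝ) i).contDiff.of_le
    le_top).comp_contDiffAt x h0

-- entry smoothness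
lemma entry1 {U : Set (Fin 3 → ℝ)} (hU : IsOpen U) {η : (Fin 3 → ℝ) → (Fin 3 → ℝ)}
    (hη : ContDiffOn ℝ 2 η U) {x : Fin 3 → ℝ} (hx : x ∈ U) (i r : Fin 3) :
    ContDiffAt ℝ 1 (fun y => sjac η y i r) x := by
  have h1 := comp2 hU hη hx i
  have h2 : ContDiffAt ℝ 1 (fderiv ℝ (fun y => η y i)) x := h1.fderiv_right (by norm_num)
  have h3 : ContDiffAt ℝ 1 (fun y => fderiv ℝ (fun z => η z i) y (Pi.single r 1)) x :=
    h2.clm_apply contDiffAt_const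
  simpa [sjac] using h3

-- Clairaut for scalar C² functions
lemma clairaut {f : (Fin 3 → ℝ) → ℝ} {x : Fin 3 → ℝ} (hf : ContDiffAt ℝ 2 f x)
    (v w : Fin 3 → ℝ) :
    fderiv ℝ (fun y => fderiv ℝ f y v) x w = fderiv ℝ (fun y => fderiv ℝ f y w) x v := by
  have hd : DifferentiableAt ℝ (fderiv ℝ f) x :=
    (hf.fderiv_right (m := 1) (le_refl 2)).differentiableAt one_ne_zero
  have hv : fderiv ℝ (fun y => fderiv ℝ f y v) x = (fderiv ℝ (fderiv ℝ f) x).flip v := by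
    rw [fderiv_clm_apply hd (differentiableAt_const v)]
    simp
  have hw : fderiv ℝ (fun y => fderiv ℝ f y w) x = (fderiv ℝ (fderiv ℝ f) x).flip w := by
    rw [fderiv_clm_apply hd (differentiableAt_const w)]
    simp
  rw [hv, hw]
  simpa using (hf.isSymmSndFDerivAt (by simp)) w v


lemma detdiff {U : Set (Fin 3 → ℝ)} (hU : IsOpen U) {η : (Fin 3 → ℝ) → (Fin 3 → ℝ)}
    (hη : ContDiffOn ℝ 2 η U) {x : Fin 3 → ℝ} (hx : x ∈ U) :
    DifferentiableAt ℝ (fun y => (sjac η y).det) x := by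
  have hE : ∀ i r : Fin 3, DifferentiableAt ℝ (fun y => sjac η y i r) x := fun i r =>
    (entry1 hU hη hx i r).differentiableAt one_ne_zero
  simp only [Matrix.det_fin_three]
  exact (((((((hE 0 0).mul (hE 1 1)).mul (hE 2 2)).sub
    (((hE 0 0).mul (hE 1 2)).mul (hE 2 1))).sub
    (((hE 0 1).mul (hE 1 0)).mul (hE 2 2))).add
    (((hE 0 1).mul (hE 1 2)).mul (hE 2 0))).add
    (((hE 0 2).mul (hE 1 0)).mul (hE 2 1))).sub
    (((hE 0 2).mul (hE 1 1)).mul (hE 2 0))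

lemma invdiff {U : Set (Fin 3 → ℝ)} (hU : IsOpen U) {η : (Fin 3 → ℝ) → (Fin 3 → ℝ)}
    (hη : ContDiffOn ℝ 2 η U) (hinv : ∀ x ∈ U, (sjac η x).det ≠ 0) {x : Fin 3 → ℝ}
    (hx : x ∈ U) (r i : Fin 3) :
    DifferentiableAt ℝ (fun y => (sjac η y)⁻¹ r i) x := by
  have hE : ∀ i r : Fin 3, DifferentiableAt ℝ (fun y => sjac η y i r) x := fun i r =>
    (entry1 hU hη hx i r).differentiableAt one_ne_zero
  have hd : DifferentiableAt ℝ (fun y => ((sjac η y).det)⁻¹) x :=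
    (detdiff hU hη hx).inv (hinv x hx)
  have pd : ∀ a b c d e f g h : Fin 3, DifferentiableAt ℝ
      (fun y => ((sjac η y).det)⁻¹ *
        (sjac η y a b * sjac η y c d - sjac η y e f * sjac η y g h)) x :=
    fun a b c d e f g h => hd.mul (((hE a b).mul (hE c d)).sub ((hE e f).mul (hE g h)))
  have key : ∀ y, (sjac η y)⁻¹ r i = ((sjac η y).det)⁻¹ * (sjac η y).adjugate r i := by
    intro y
    rw [Matrix.inv_def, Matrix.smul_apply, Ring.inverse_eq_inv', smul_eq_mul]
  simp only [key, Matrix.adjugate_fin_three]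
  fin_cases r <;> fin_cases i <;>
    simp only [neg_add_eq_sub, Fin.zero_eta, Fin.mk_one, Fin.isValue,
      Matrix.cons_val', Matrix.cons_val_zero, Matrix.cons_val_one, Matrix.head_cons,
      Matrix.empty_val', Matrix.cons_val_fin_one, Matrix.head_fin_const,
      show ((⟨2, by norm_num⟩ : Fin 3) = 2) from rfl, Matrix.cons_val_two, Matrix.tail_cons] <;>
    exact pd _ _ _ _ _ _ _ _

lemma antisym_sum (B : Matrix (Fin 3) (Fin 3) ℝ) (H : Fin 3 → Fin 3 → ℝ)
    (hH : ∀ r s, H r s = H s r) (k : Fin 3) :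
    ∑ i : Fin 3, ∑ j : Fin 3, ∑ s : Fin 3,
      eps k j i * B s j * (∑ r : Fin 3, B r i * H r s) = 0 := by
  fin_cases k <;>
  · simp only [Fin.sum_univ_three, Fin.zero_eta, Fin.mk_one, Fin.isValue]
    norm_num [eps, Prod.ext_iff, Fin.ext_iff]
    rw [hH 1 0, hH 2 0, hH 2 1]
    ring

end Aux

/-- The Lagrangian curl annihilates Lagrangian gradients: with `A = (Dη)⁻¹`,
for `η, F` of class `C²` on an open set `U` with `Dη` invertible on `U`,
`curl_η (∇_η F) = 0`, i.e. `ε_{kji} A^s_j ∂_s (A^r_i F,_r) = 0` on `U`. -/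
theorem curl_eta_grad_eta (U : Set (Fin 3 → ℝ)) (hU : IsOpen U)
    (η : (Fin 3 → ℝ) → (Fin 3 → ℝ)) (hη : ContDiffOn ℝ 2 η U)
    (hinv : ∀ x ∈ U, (sjac η x).det ≠ 0)
    (F : (Fin 3 → ℝ) → ℝ) (hF : ContDiffOn ℝ 2 F U) :
    ∀ x ∈ U, ∀ k : Fin 3,
      ∑ i : Fin 3, ∑ j : Fin 3, ∑ s : Fin 3,
        eps k j i * (sjac η x)⁻¹ s j *
          fderiv ℝ
            (fun y => ∑ r : Fin 3, (sjac η y)⁻¹ r i * fderiv ℝ F y (Pi.single r 1))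
            x (Pi.single s 1) = 0 := by
  intro x hx k
  -- the Lagrangian gradient components
  set g : Fin 3 → (Fin 3 → ℝ) → ℝ :=
    fun i y => ∑ r : Fin 3, (sjac η y)⁻¹ r i * fderiv ℝ F y (Pi.single r 1) with hg
  -- differentiability of `fderiv F` applications near x
  have hFd : ∀ y ∈ U, ∀ r : Fin 3,
      DifferentiableAt ℝ (fun z => fderiv ℝ F z (Pi.single r 1)) y := by
    intro y hy r
    have h1 : ContDiffAt ℝ 1 (fderiv ℝ F) y :=
      (hF.contDiffAt (hU.mem_nhds hy)).fderiv_right (by norm_num)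
    exact (h1.clm_apply contDiffAt_const).differentiableAt one_ne_zero
  have hEd : ∀ i r : Fin 3, DifferentiableAt ℝ (fun y => sjac η y i r) x := fun i r =>
    (entry1 hU hη hx i r).differentiableAt one_ne_zero
  have hBd : ∀ r i : Fin 3, DifferentiableAt ℝ (fun y => (sjac η y)⁻¹ r i) x :=
    fun r i => invdiff hU hη hinv hx r i
  have hgd : ∀ i, DifferentiableAt ℝ (g i) x := by
    intro i
    exact DifferentiableAt.fun_sum fun r _ => (hBd r i).mul (hFd x hx r)
  -- the fundamental identity  Mᵀ ⬝ g = ∇F on U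
  have hid : ∀ y ∈ U, ∀ r : Fin 3,
      ∑ i : Fin 3, sjac η y i r * g i y = fderiv ℝ F y (Pi.single r 1) := by
    intro y hy r
    have hu : IsUnit (sjac η y).det := isUnit_iff_ne_zero.mpr (hinv y hy)
    have h1 : (sjac η y)⁻¹ * sjac η y = 1 := Matrix.nonsing_inv_mul _ hu
    calc ∑ i : Fin 3, sjac η y i r * g i y
        = ∑ i : Fin 3, ∑ m : Fin 3,
            sjac η y i r * ((sjac η y)⁻¹ m i * fderiv ℝ F y (Pi.single m 1)) := by
          simp [hg, Finset.mul_sum]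
      _ = ∑ m : Fin 3, (∑ i : Fin 3, (sjac η y)⁻¹ m i * sjac η y i r) *
            fderiv ℝ F y (Pi.single m 1) := by
          rw [Finset.sum_comm]
          refine Finset.sum_congr rfl fun m _ => ?_
          rw [Finset.sum_mul]
          refine Finset.sum_congr rfl fun i _ => by ring
      _ = ∑ m : Fin 3, (1 : Matrix (Fin 3) (Fin 3) ℝ) m r * fderiv ℝ F y (Pi.single m 1) := by
          refine Finset.sum_congr rfl fun m _ => ?_
          rw [← Matrix.mul_apply, h1]
      _ = fderiv ℝ F y (Pi.single r 1) := by
          simp [Matrix.one_apply]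
  -- differentiate the identity at x
  have key : ∀ r s : Fin 3,
      ∑ i : Fin 3, (g i x * fderiv ℝ (fun y => sjac η y i r) x (Pi.single s 1)
        + sjac η x i r * fderiv ℝ (g i) x (Pi.single s 1))
      = fderiv ℝ (fun y => fderiv ℝ F y (Pi.single r 1)) x (Pi.single s 1) := by
    intro r s
    have hEq : (fun y => ∑ i : Fin 3, sjac η y i r * g i y)
        =ᶠ[nhds x] fun y => fderiv ℝ F y (Pi.single r 1) := by
      filter_upwards [hU.mem_nhds hx] with y hy using hid y hy r
    have hL : fderiv ℝ (fun y => ∑ i : Fin 3, sjac η y i r * g i y) x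
        = ∑ i : Fin 3, (sjac η x i r • fderiv ℝ (g i) x
            + g i x • fderiv ℝ (fun y => sjac η y i r) x) := by
      rw [fderiv_fun_sum (A := fun i y => sjac η y i r * g i y) fun i _ => (hEd i r).mul (hgd i)]
      exact Finset.sum_congr rfl fun i _ => fderiv_mul (hEd i r) (hgd i)
    have h2 := congrArg (fun L : (Fin 3 → ℝ) →L[ℝ] ℝ => L (Pi.single s 1)) hEq.fderiv_eq
    simp only [hL] at h2
    rw [← h2]
    simp [ContinuousLinearMap.sum_apply, ContinuousLinearMap.add_apply,
      ContinuousLinearMap.smul_apply, smul_eq_mul]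
    exact Finset.sum_congr rfl fun i _ => by ring
  -- the symmetric matrix H
  set H : Fin 3 → Fin 3 → ℝ := fun r s =>
    fderiv ℝ (fun y => fderiv ℝ F y (Pi.single r 1)) x (Pi.single s 1)
      - ∑ i : Fin 3, g i x * fderiv ℝ (fun y => sjac η y i r) x (Pi.single s 1) with hH
  have hHsymm : ∀ r s, H r s = H s r := by
    intro r s
    have h1 : fderiv ℝ (fun y => fderiv ℝ F y (Pi.single r 1)) x (Pi.single s 1)
        = fderiv ℝ (fun y => fderiv ℝ F y (Pi.single s 1)) x (Pi.single r 1) :=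
      clairaut (hF.contDiffAt (hU.mem_nhds hx)) _ _
    have h2 : ∀ i : Fin 3, fderiv ℝ (fun y => sjac η y i r) x (Pi.single s 1)
        = fderiv ℝ (fun y => sjac η y i s) x (Pi.single r 1) := by
      intro i
      have : (fun y => sjac η y i r)
          = fun y => fderiv ℝ (fun z => η z i) y (Pi.single r 1) := rfl
      rw [this, show (fun y => sjac η y i s)
          = fun y => fderiv ℝ (fun z => η z i) y (Pi.single s 1) from rfl]
      exact clairaut (comp2 hU hη hx i) _ _
    simp only [hH, h1]
    congr 1
    exact Finset.sum_congr rfl fun i _ => by rw [h2 i]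
  -- solve for the derivatives of g
  have hMD : ∀ r s : Fin 3,
      ∑ i : Fin 3, sjac η x i r * fderiv ℝ (g i) x (Pi.single s 1) = H r s := by
    intro r s
    have := key r s
    rw [Finset.sum_add_distrib] at this
    simp only [hH]
    linarith [this]
  have hD : ∀ i s : Fin 3, fderiv ℝ (g i) x (Pi.single s 1)
      = ∑ r : Fin 3, (sjac η x)⁻¹ r i * H r s := by
    have hu : IsUnit ((sjac η x)ᵀ).det := by
      rw [Matrix.det_transpose]; exact isUnit_iff_ne_zero.mpr (hinv x hx)
    have hMat : (sjac η x)ᵀ * Matrix.of (fun i s => fderiv ℝ (g i) x (Pi.single s 1))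
        = Matrix.of H := by
      ext r s
      simp only [Matrix.mul_apply, Matrix.transpose_apply, Matrix.of_apply]
      exact hMD r s
    have h2 : Matrix.of (fun i s => fderiv ℝ (g i) x (Pi.single s 1))
        = ((sjac η x)ᵀ)⁻¹ * Matrix.of H := by
      rw [← hMat, ← Matrix.mul_assoc, Matrix.nonsing_inv_mul _ hu, Matrix.one_mul]
    intro i s
    have h3 := congrFun (congrFun h2 i) s
    simp only [Matrix.of_apply] at h3
    rw [h3, ← Matrix.transpose_nonsing_inv, Matrix.mul_apply]
    exact Finset.sum_congr rfl fun r _ => by rw [Matrix.transpose_apply, Matrix.of_apply]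
  simp only [show ∀ i, (fun y => ∑ r : Fin 3, (sjac η y)⁻¹ r i * fderiv ℝ F y (Pi.single r 1)) = g i
    from fun i => rfl, hD]
  exact antisym_sum ((sjac η x)⁻¹) H hHsymm k
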